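/- Let X be a geodesic metric space such that for all points x, y ∈ X and all real numbers r > 0 and 0 < r' ≤ r/2, the set B(x,r) ∖ B(y,r') (difference of open balls) is nonempty and connected. Let Y be a geodesic metric space satisfying the four-point condition with δ = 0 (an ℝ-tree). Let x₀ ∈ X, R > 0, λ₁ ≥ 1, λ₂ ≥ 1, c₁ > 0, c₂ ≥ 0, and let f : B(x₀,R) → Y be a (λ₁,λ₂,c₁,c₂)-quasi-isometric embedding. Then R ≤ 12·λ₂·c₁ + 4·c₂. -/
import Mathlib


open Metric Set

/-- A metric space is geodesic: any two points are joined by an isometric image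
of the interval `[0, dist x y]`. -/
def IsGeodesicMetricSpace (X : Type*) [MetricSpace X] : Prop :=
  ∀ x y : X, ∃ γ : ℝ → X, γ 0 = x ∧ γ (dist x y) = y ∧
    ∀ s ∈ Icc (0 : ℝ) (dist x y), ∀ t ∈ Icc (0 : ℝ) (dist x y),
      dist (γ s) (γ t) = |s - t|

/-- In a preconnected subset of a metric space, any two points are joined by an
`ε`-chain staying in the set. -/
private lemma chain_exists' {X : Type*} [MetricSpace X] {A : Set X} (hA : IsPreconnected A)
    {u v : X} (hu : u ∈ A) (hv : v ∈ A) {ε : ℝ} (hε : 0 < ε) :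
    Relation.ReflTransGen (fun a b => a ∈ A ∧ b ∈ A ∧ dist a b ≤ ε) u v := by
  by_contra hcon
  set S : X → X → Prop := fun a b => a ∈ A ∧ b ∈ A ∧ dist a b ≤ ε with hS
  set U : Set X := ⋃ y ∈ {y | y ∈ A ∧ Relation.ReflTransGen S u y}, ball y ε with hU
  set V : Set X := ⋃ y ∈ {y | y ∈ A ∧ ¬ Relation.ReflTransGen S u y}, ball y ε with hV
  have hUo : IsOpen U := isOpen_biUnion fun _ _ => isOpen_ball
  have hVo : IsOpen V := isOpen_biUnion fun _ _ => isOpen_ball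
  have hcover : A ⊆ U ∪ V := by
    intro y hy
    by_cases h : Relation.ReflTransGen S u y
    · exact Or.inl (mem_biUnion ⟨hy, h⟩ (mem_ball_self hε))
    · exact Or.inr (mem_biUnion ⟨hy, h⟩ (mem_ball_self hε))
  have h1 : (A ∩ U).Nonempty :=
    ⟨u, hu, mem_biUnion ⟨hu, Relation.ReflTransGen.refl⟩ (mem_ball_self hε)⟩
  have h2 : (A ∩ V).Nonempty := ⟨v, hv, mem_biUnion ⟨hv, hcon⟩ (mem_ball_self hε)⟩
  obtain ⟨x, hxA, hxU, hxV⟩ := hA U V hUo hVo hcover h1 h2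
  simp only [hU, hV, mem_iUnion, exists_prop, mem_setOf_eq] at hxU hxV
  obtain ⟨y₁, ⟨hy₁A, hy₁R⟩, hxy₁⟩ := hxU
  obtain ⟨y₂, ⟨hy₂A, hy₂R⟩, hxy₂⟩ := hxV
  apply hy₂R
  have s1 : S y₁ x := ⟨hy₁A, hxA, by rw [dist_comm]; exact (mem_ball.mp hxy₁).le⟩
  have s2 : S x y₂ := ⟨hxA, hy₂A, (mem_ball.mp hxy₂).le⟩
  exact (hy₁R.tail s1).tail s2

/-- In a `0`-hyperbolic space, the image of a preconnected set whose small steps are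
mapped to steps of size at most `cc` must pass within `cc/2` of any point `w` lying
"between" the images of two of its points. -/
private lemma gromov_chain_near {X Y : Type*} [MetricSpace X] [MetricSpace Y]
    (hYtree : ∀ p q r s : Y,
      dist p q + dist r s ≤ max (dist p r + dist q s) (dist p s + dist q r))
    (F : X → Y) {A : Set X} (hA : IsPreconnected A)
    {u v : X} (hu : u ∈ A) (hv : v ∈ A)
    {ε cc : ℝ} (hε : 0 < ε) (hcc : 0 ≤ cc)
    (hstep : ∀ a b : X, a ∈ A → b ∈ A → dist a b ≤ ε → dist (F a) (F b) ≤ cc)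
    {w : Y} (hw : dist (F u) w + dist (F v) w ≤ dist (F u) (F v)) :
    ∃ α ∈ A, dist (F α) w ≤ cc / 2 := by
  by_contra hcon
  push_neg at hcon
  have main : ∀ y, Relation.ReflTransGen (fun a b => a ∈ A ∧ b ∈ A ∧ dist a b ≤ ε) u y →
      dist (F u) (F y) < dist (F u) w + dist (F y) w := by
    intro y hy
    induction hy with
    | refl =>
        have h0 := hcon u hu
        rw [dist_self]
        linarith
    | @tail b c' hub hbc ih =>
        obtain ⟨hbA, hcA, hbc'⟩ := hbc
        have h5 := hstep b c' hbA hcA hbc'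
        have h4 := hYtree (F u) (F c') (F b) w
        have e1 : dist (F c') (F b) = dist (F b) (F c') := dist_comm _ _
        have h6 := hcon b hbA
        have h7 := hcon c' hcA
        rcases le_max_iff.mp h4 with h | h
        · linarith
        · linarith
  linarith [main v (chain_exists' hA hu hv hε), hw]

theorem stmt_1
    {X Y : Type*} [MetricSpace X] [MetricSpace Y]
    (hXgeo : IsGeodesicMetricSpace X)
    (hXconn : ∀ (x y : X) (r r' : ℝ), 0 < r → 0 < r' → r' ≤ r / 2 →
      IsConnected (ball x r \ ball y r'))
    (hYgeo : IsGeodesicMetricSpace Y)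
    (hYtree : ∀ p q r s : Y,
      dist p q + dist r s ≤ max (dist p r + dist q s) (dist p s + dist q r))
    (x₀ : X) (R lam₁ lam₂ c₁ c₂ : ℝ)
    (hR : 0 < R) (hlam₁ : 1 ≤ lam₁) (hlam₂ : 1 ≤ lam₂) (hc₁ : 0 < c₁) (hc₂ : 0 ≤ c₂)
    (f : closedBall x₀ R → Y)
    (hqi : ∀ x x' : closedBall x₀ R,
      (dist (x : X) (x' : X) - c₂) / lam₂ ≤ dist (f x) (f x') ∧
      dist (f x) (f x') ≤ lam₁ * dist (x : X) (x' : X) + c₁) :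
    R ≤ 12 * lam₂ * c₁ + 4 * c₂ := by
  classical
  have hx₀D : x₀ ∈ closedBall x₀ R := mem_closedBall_self hR.le
  set F : X → Y := fun x => if h : x ∈ closedBall x₀ R then f ⟨x, h⟩ else f ⟨x₀, hx₀D⟩
    with hFdef
  have hFeq : ∀ (x : X) (h : x ∈ closedBall x₀ R), F x = f ⟨x, h⟩ := fun x h => dif_pos h
  have hlam₂0 : (0:ℝ) < lam₂ := by linarith
  have hFlow : ∀ x y : X, x ∈ closedBall x₀ R → y ∈ closedBall x₀ R →
      dist x y ≤ lam₂ * dist (F x) (F y) + c₂ := by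
    intro x y hx hy
    have h : (dist x y - c₂) / lam₂ ≤ dist (f ⟨x, hx⟩) (f ⟨y, hy⟩) := (hqi ⟨x, hx⟩ ⟨y, hy⟩).1
    rw [hFeq x hx, hFeq y hy]
    rw [div_le_iff₀ hlam₂0] at h
    nlinarith [h]
  have hFup : ∀ x y : X, x ∈ closedBall x₀ R → y ∈ closedBall x₀ R →
      dist (F x) (F y) ≤ lam₁ * dist x y + c₁ := by
    intro x y hx hy
    have h : dist (f ⟨x, hx⟩) (f ⟨y, hy⟩) ≤ lam₁ * dist x y + c₁ := (hqi ⟨x, hx⟩ ⟨y, hy⟩).2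
    rw [hFeq x hx, hFeq y hy]
    exact h
  -- Key quantitative estimate.
  have key : ∀ ε : ℝ, 0 < ε → ∀ r : ℝ, 0 < r → r < R →
      r / 2 ≤ 2 * lam₂ * (lam₁ * ε + c₁) + 2 * c₂ := by
    intro ε hε r hr hrR
    have hcc0 : 0 ≤ lam₁ * ε + c₁ := by nlinarith
    -- a point far from x₀
    obtain ⟨z', hz'⟩ := (hXconn x₀ x₀ (2*R) R (by linarith) hR (by linarith)).nonempty
    obtain ⟨hz'ball, hz'out⟩ := hz'
    have hz'far : R ≤ dist x₀ z' := by
      rw [dist_comm]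
      exact not_lt.mp (fun h => hz'out (mem_ball.mpr h))
    obtain ⟨γ, hγ0, hγe, hγiso⟩ := hXgeo x₀ z'
    set L := dist x₀ z' with hL
    have hrL : r ≤ L := hrR.le.trans hz'far
    have distγ : ∀ s t : ℝ, s ∈ Icc (0:ℝ) L → t ∈ Icc (0:ℝ) L →
        dist (γ s) (γ t) = |s - t| := fun s t hs ht => hγiso s hs t ht
    have mem0 : (0:ℝ) ∈ Icc (0:ℝ) L := ⟨le_refl _, by linarith⟩
    have memr : r ∈ Icc (0:ℝ) L := ⟨hr.le, hrL⟩
    have memr2 : r/2 ∈ Icc (0:ℝ) L := ⟨by linarith, by linarith⟩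
    set z := γ r with hzdef
    set m := γ (r/2) with hm
    have dxz : dist x₀ z = r := by
      rw [hzdef, ← hγ0, distγ 0 r mem0 memr, zero_sub, abs_neg, abs_of_nonneg hr.le]
    have dxm : dist x₀ m = r/2 := by
      rw [hm, ← hγ0, distγ 0 (r/2) mem0 memr2, zero_sub, abs_neg,
        abs_of_nonneg (by linarith : (0:ℝ) ≤ r/2)]
    have dmz : dist m z = r/2 := by
      rw [hm, hzdef, distγ (r/2) r memr2 memr, abs_of_nonpos (by linarith)]
      ring
    have hγball : ∀ t : ℝ, 0 ≤ t → t ≤ r → γ t ∈ closedBall x₀ R := by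
      intro t h0 h1
      rw [mem_closedBall, ← hγ0, distγ t 0 ⟨h0, by linarith⟩ mem0, sub_zero,
        abs_of_nonneg h0]
      linarith
    have hzD : z ∈ closedBall x₀ R := hγball r hr.le le_rfl
    -- the annulus around m
    have hAm := hXconn x₀ m R (r/2) hR (by linarith) (by linarith)
    have hx₀A : x₀ ∈ ball x₀ R \ ball m (r/2) := by
      refine ⟨mem_ball_self hR, fun h => ?_⟩
      rw [mem_ball] at h
      rw [dxm] at h
      exact lt_irrefl _ h
    have hzA : z ∈ ball x₀ R \ ball m (r/2) := by
      constructor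
      · rw [mem_ball, dist_comm, dxz]; exact hrR
      · intro h
        rw [mem_ball, dist_comm, dmz] at h
        exact lt_irrefl _ h
    have hAD : ∀ x ∈ ball x₀ R \ ball m (r/2), x ∈ closedBall x₀ R :=
      fun x hx => ball_subset_closedBall hx.1
    -- the two half geodesic segments
    have hLip : LipschitzOnWith 1 γ (Icc 0 L) := by
      apply LipschitzOnWith.of_dist_le_mul
      intro s hs t ht
      rw [distγ s t hs ht, Real.dist_eq, NNReal.coe_one, one_mul]
    have hG₁pc : IsPreconnected (γ '' Icc 0 (r/2)) :=
      isPreconnected_Icc.image _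
        (hLip.continuousOn.mono (Icc_subset_Icc le_rfl (by linarith)))
    have hG₂pc : IsPreconnected (γ '' Icc (r/2) r) :=
      isPreconnected_Icc.image _
        (hLip.continuousOn.mono (Icc_subset_Icc (by linarith) hrL))
    have hG₁D : ∀ x ∈ γ '' Icc 0 (r/2), x ∈ closedBall x₀ R := by
      rintro x ⟨t, ht, rfl⟩
      exact hγball t ht.1 (le_trans ht.2 (by linarith))
    have hG₂D : ∀ x ∈ γ '' Icc (r/2) r, x ∈ closedBall x₀ R := by
      rintro x ⟨t, ht, rfl⟩
      exact hγball t (le_trans (by linarith) ht.1) ht.2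
    have hx₀G₁ : x₀ ∈ γ '' Icc 0 (r/2) := ⟨0, ⟨le_rfl, by linarith⟩, hγ0⟩
    have hmG₁ : m ∈ γ '' Icc 0 (r/2) := ⟨r/2, ⟨by linarith, le_rfl⟩, hm.symm⟩
    have hmG₂ : m ∈ γ '' Icc (r/2) r := ⟨r/2, ⟨le_rfl, by linarith⟩, hm.symm⟩
    have hzG₂ : z ∈ γ '' Icc (r/2) r := ⟨r, ⟨by linarith, le_rfl⟩, hzdef.symm⟩
    -- step estimate
    have hstepOf : ∀ B : Set X, (∀ x ∈ B, x ∈ closedBall x₀ R) →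
        ∀ a' b' : X, a' ∈ B → b' ∈ B → dist a' b' ≤ ε →
        dist (F a') (F b') ≤ lam₁ * ε + c₁ := by
      intro B hB a' b' ha hb hd
      have h1 := hFup a' b' (hB a' ha) (hB b' hb)
      have h2 : lam₁ * dist a' b' ≤ lam₁ * ε :=
        mul_le_mul_of_nonneg_left hd (by linarith)
      linarith
    -- the Y-side: geodesic from F x₀ to F z, and the median point w
    obtain ⟨σ, hσ0, hσD, hσiso⟩ := hYgeo (F x₀) (F z)
    set t₀ := (dist (F x₀) (F m) + dist (F x₀) (F z) - dist (F m) (F z)) / 2 with ht₀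
    have ht₀0 : 0 ≤ t₀ := by
      have h := dist_triangle (F m) (F x₀) (F z)
      have hc := dist_comm (F m) (F x₀)
      rw [ht₀]; linarith
    have ht₀D : t₀ ≤ dist (F x₀) (F z) := by
      have h := dist_triangle (F x₀) (F z) (F m)
      have hc := dist_comm (F z) (F m)
      rw [ht₀]; linarith
    have memt₀ : t₀ ∈ Icc (0:ℝ) (dist (F x₀) (F z)) := ⟨ht₀0, ht₀D⟩
    set w := σ t₀ with hwdef
    have haw : dist (F x₀) w = t₀ := by
      have h := hσiso 0 ⟨le_rfl, dist_nonneg⟩ t₀ memt₀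
      rw [hσ0] at h
      rw [hwdef, h, zero_sub, abs_neg, abs_of_nonneg ht₀0]
    have hbw : dist (F z) w = dist (F x₀) (F z) - t₀ := by
      have h := hσiso (dist (F x₀) (F z)) ⟨dist_nonneg, le_rfl⟩ t₀ memt₀
      rw [hσD] at h
      rw [hwdef, h, abs_of_nonneg (by linarith)]
    have hew : dist (F m) w ≤
        (dist (F m) (F x₀) + dist (F m) (F z) - dist (F x₀) (F z)) / 2 := by
      have h4 := hYtree (F m) w (F x₀) (F z)
      have hc1 : dist (F m) (F x₀) = dist (F x₀) (F m) := dist_comm _ _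
      have hc2 : dist w (F z) = dist (F z) w := dist_comm _ _
      have hc3 : dist w (F x₀) = dist (F x₀) w := dist_comm _ _
      rcases le_max_iff.mp h4 with h | h
      · rw [ht₀] at haw hbw; linarith
      · rw [ht₀] at haw hbw; linarith
    have hc1 : dist (F m) (F x₀) = dist (F x₀) (F m) := dist_comm _ _
    have cond1 : dist (F x₀) w + dist (F z) w ≤ dist (F x₀) (F z) := by
      rw [haw, hbw]; linarith
    have cond2 : dist (F x₀) w + dist (F m) w ≤ dist (F x₀) (F m) := by
      rw [haw]; rw [ht₀]; linarith [hew]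
    have cond3 : dist (F m) w + dist (F z) w ≤ dist (F m) (F z) := by
      rw [hbw]; rw [ht₀] at *; linarith [hew]
    -- three chain applications
    obtain ⟨α, hαA, hα⟩ := gromov_chain_near hYtree F hAm.isPreconnected hx₀A hzA
      hε hcc0 (hstepOf _ hAD) cond1
    obtain ⟨p, hpG, hp⟩ := gromov_chain_near hYtree F hG₁pc hx₀G₁ hmG₁
      hε hcc0 (hstepOf _ hG₁D) cond2
    obtain ⟨q, hqG, hq⟩ := gromov_chain_near hYtree F hG₂pc hmG₂ hzG₂
      hε hcc0 (hstepOf _ hG₂D) cond3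
    obtain ⟨sp, hspI, hspEq⟩ := hpG
    obtain ⟨sq, hsqI, hsqEq⟩ := hqG
    have hpD : p ∈ closedBall x₀ R := by
      rw [← hspEq]; exact hγball sp hspI.1 (le_trans hspI.2 (by linarith))
    have hqD : q ∈ closedBall x₀ R := by
      rw [← hsqEq]; exact hγball sq (le_trans (by linarith) hsqI.1) hsqI.2
    have hspL : sp ∈ Icc (0:ℝ) L := ⟨hspI.1, le_trans hspI.2 (by linarith)⟩
    have hsqL : sq ∈ Icc (0:ℝ) L := ⟨le_trans (by linarith) hsqI.1, le_trans hsqI.2 hrL⟩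
    have hFαp : dist (F α) (F p) ≤ lam₁ * ε + c₁ := by
      have ht := dist_triangle (F α) w (F p)
      have hcm : dist w (F p) = dist (F p) w := dist_comm _ _
      linarith
    have hFpq : dist (F p) (F q) ≤ lam₁ * ε + c₁ := by
      have ht := dist_triangle (F p) w (F q)
      have hcm : dist w (F q) = dist (F q) w := dist_comm _ _
      linarith
    have hαp : dist α p ≤ lam₂ * (lam₁ * ε + c₁) + c₂ := by
      have h := hFlow α p (ball_subset_closedBall hαA.1) hpD
      have h2 : lam₂ * dist (F α) (F p) ≤ lam₂ * (lam₁ * ε + c₁) :=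
        mul_le_mul_of_nonneg_left hFαp (by linarith)
      linarith
    have hpq : dist p q ≤ lam₂ * (lam₁ * ε + c₁) + c₂ := by
      have h := hFlow p q hpD hqD
      have h2 : lam₂ * dist (F p) (F q) ≤ lam₂ * (lam₁ * ε + c₁) :=
        mul_le_mul_of_nonneg_left hFpq (by linarith)
      linarith
    have hpm : dist p m = r/2 - sp := by
      rw [← hspEq, hm, distγ sp (r/2) hspL memr2, abs_of_nonpos (by linarith [hspI.2])]
      ring
    have hpq2 : dist p q = sq - sp := by
      rw [← hspEq, ← hsqEq, distγ sp sq hspL hsqL,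
        abs_of_nonpos (by linarith [hspI.2, hsqI.1])]
      ring
    have hαm : r/2 ≤ dist α m := le_of_not_gt (fun h => hαA.2 (mem_ball.mpr h))
    have htri := dist_triangle α p m
    have hsq1 : r/2 ≤ sq := hsqI.1
    linarith
  -- now take limits
  have hR2 : R / 2 ≤ 2 * lam₂ * c₁ + 2 * c₂ := by
    by_contra hcon
    push_neg at hcon
    obtain ⟨ε', hε'def⟩ : ∃ e : ℝ, e = R/2 - (2*lam₂*c₁ + 2*c₂) := ⟨_, rfl⟩
    have hε' : 0 < ε' := by rw [hε'def]; linarith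
    have hll : (0:ℝ) < lam₂ * lam₁ := by nlinarith
    have hεpos : 0 < ε' / (8 * (lam₂ * lam₁)) := by positivity
    have hminR : 0 < min ε' R := lt_min hε' hR
    have hminle : min ε' R ≤ ε' := min_le_left _ _
    have hminle2 : min ε' R ≤ R := min_le_right _ _
    have h := key (ε' / (8 * (lam₂ * lam₁))) hεpos (R - min ε' R / 2)
      (by linarith) (by linarith)
    have hcalc : 2 * lam₂ * (lam₁ * (ε' / (8 * (lam₂ * lam₁))) + c₁)
        = ε'/4 + 2 * lam₂ * c₁ := by
      have h1 : lam₂ ≠ 0 := by linarith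
      have h2 : lam₁ ≠ 0 := by linarith
      field_simp
      ring
    rw [hcalc] at h
    rw [hε'def] at *
    linarith
  nlinarith [mul_nonneg (le_trans zero_le_one hlam₂) hc₁.le]
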